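/- arXiv:0711.0481 — 2 statements merged into one kernel-verified Lean document; each statement's English description precedes it below -/
import Mathlib

section
/- Let q ∈ (-1,1], q ≠ 0. For every natural number x and every natural number n, [x]^n = Σ_{j=0}^{n} S(n,j,q) · [x][x-1]⋯[x-j+1], where the empty product (j = 0) is 1. -/
open Finset

/-- The q-integer `[m] = (1 - q^m)/(1 - q)`, with `[m] = m` when `q = 1`. -/
noncomputable def qInt (q : ℝ) (m : ℤ) : ℝ := if q = 1 then m else (1 - q ^ m) / (1 - q)

/-- The q-factorial `[n]! = [n][n-1]⋯[1]`, `[0]! = 1`. -/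
noncomputable def qFact (q : ℝ) : ℕ → ℝ
  | 0 => 1
  | n + 1 => qInt q (n + 1) * qFact q n

/-- The q-binomial coefficient `(n choose k)_q = [n]!/([n-k]![k]!)`. -/
noncomputable def qBinom (q : ℝ) (n k : ℕ) : ℝ := qFact q n / (qFact q (n - k) * qFact q k)

/-- The q-deformed Stirling numbers of the second kind, defined by the recurrence
`S(n+1,k,q) = q^(k-1) S(n,k-1,q) + [k] S(n,k,q)`, with `S(0,0,q)=1`, `S(n,0,q)=0` for `n ≥ 1`,
and `S(n,k,q) = 0` for `k > n`. -/
noncomputable def qStirling2 (q : ℝ) : ℕ → ℕ → ℝ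
  | 0, 0 => 1
  | 0, _ + 1 => 0
  | _ + 1, 0 => 0
  | n + 1, k + 1 => q ^ k * qStirling2 q n k + qInt q (k + 1) * qStirling2 q n (k + 1)

lemma qInt_zero (q : ℝ) : qInt q 0 = 0 := by
  simp [qInt]

lemma qInt_split (q : ℝ) (hq0 : q ≠ 0) (x : ℤ) (j : ℕ) :
    qInt q x = qInt q j + q ^ j * qInt q (x - j) := by
  unfold qInt
  by_cases h : q = 1
  · subst h; push_cast; simp
  · simp only [if_neg h]
    have h1 : (1 : ℝ) - q ≠ 0 := sub_ne_zero.mpr (Ne.symm h)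
    have hpow : q ^ (j : ℕ) * q ^ (x - (j : ℤ)) = q ^ x := by
      rw [← zpow_natCast q j, ← zpow_add₀ hq0]
      ring_nf
    field_simp
    simp only [zpow_natCast] at *
    linear_combination (1 : ℝ) * hpow

lemma qStirling2_eq_zero (q : ℝ) : ∀ n k : ℕ, n < k → qStirling2 q n k = 0 := by
  intro n
  induction n with
  | zero => intro k hk; match k, hk with
            | k + 1, _ => rfl
  | succ n ih =>
      intro k hk
      match k, hk with
      | k + 1, hk =>
        have h1 : n < k := Nat.lt_of_succ_lt_succ hk
        have h2 : n < k + 1 := Nat.lt_succ_of_lt h1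
        show q ^ k * qStirling2 q n k + qInt q (k + 1) * qStirling2 q n (k + 1) = 0
        rw [ih k h1, ih (k + 1) h2]
        ring

theorem qInt_pow_eq_sum_qStirling2_fallingFactorial (q : ℝ) (hq0 : q ≠ 0)
    (hq : q ∈ Set.Ioc (-1 : ℝ) 1) (x n : ℕ) :
    qInt q x ^ n =
      ∑ j ∈ Finset.range (n + 1),
        qStirling2 q n j * ∏ i ∈ Finset.range j, qInt q ((x : ℤ) - i) := by
  set P : ℕ → ℝ := fun j => ∏ i ∈ Finset.range j, qInt q ((x : ℤ) - i) with hP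
  induction n with
  | zero => simp [qStirling2]
  | succ n ih =>
    rw [pow_succ, ih, Finset.sum_mul]
    have key : ∀ j : ℕ,
        qStirling2 q n j * P j * qInt q x
          = qInt q j * qStirling2 q n j * P j + q ^ j * qStirling2 q n j * P (j + 1) := by
      intro j
      have hsplit := qInt_split q hq0 (x : ℤ) j
      have hPsucc : P (j + 1) = P j * qInt q ((x : ℤ) - j) := by
        simp [hP, Finset.prod_range_succ]
      rw [hsplit, hPsucc]
      ring
    calc ∑ j ∈ Finset.range (n + 1), qStirling2 q n j * P j * qInt q x
        = ∑ j ∈ Finset.range (n + 1),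
            (qInt q j * qStirling2 q n j * P j + q ^ j * qStirling2 q n j * P (j + 1)) := by
          exact Finset.sum_congr rfl fun j _ => key j
      _ = ∑ j ∈ Finset.range (n + 1), qInt q j * qStirling2 q n j * P j
          + ∑ j ∈ Finset.range (n + 1), q ^ j * qStirling2 q n j * P (j + 1) := by
          rw [Finset.sum_add_distrib]
      _ = ∑ k ∈ Finset.range (n + 1), qInt q (k + 1) * qStirling2 q n (k + 1) * P (k + 1)
          + ∑ j ∈ Finset.range (n + 1), q ^ j * qStirling2 q n j * P (j + 1) := by
          congr 1
          rw [Finset.sum_range_succ' (fun j => qInt q j * qStirling2 q n j * P j) n]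
          rw [Finset.sum_range_succ]
          simp [qInt_zero, qStirling2_eq_zero q n (n + 1) (Nat.lt_succ_self n)]
      _ = ∑ k ∈ Finset.range (n + 1),
            (q ^ k * qStirling2 q n k + qInt q (k + 1) * qStirling2 q n (k + 1)) * P (k + 1) := by
          rw [← Finset.sum_add_distrib]
          exact Finset.sum_congr rfl fun k _ => by ring
      _ = ∑ j ∈ Finset.range (n + 2), qStirling2 q (n + 1) j * P j := by
          rw [Finset.sum_range_succ' (fun j => qStirling2 q (n + 1) j * P j) (n + 1)]
          have h0 : qStirling2 q (n + 1) 0 = 0 := rfl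
          simp only [h0, zero_mul, add_zero]
          exact Finset.sum_congr rfl fun k _ => rfl
end

section
/- Let q ∈ (-1,1], q ≠ 0. For every natural number x and every natural number n, [x][x-1]⋯[x-n+1] = Σ_{j=0}^{n} s(n,j,q) · [x]^j, where the empty product (n = 0) is 1. -/
open Finset

/-- The q-deformed Stirling numbers of the first kind, defined by the recurrence
`s(n+1,k,q) = q^(-n) (s(n,k-1,q) - [n] s(n,k,q))`, with `s(0,0,q)=1`, `s(n,0,q)=0` for `n ≥ 1`,
and `s(n,k,q) = 0` for `k > n`. -/
noncomputable def qStirling1 (q : ℝ) : ℕ → ℕ → ℝ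
  | 0, 0 => 1
  | 0, _ + 1 => 0
  | _ + 1, 0 => 0
  | n + 1, k + 1 => q ^ (-(n : ℤ)) * (qStirling1 q n k - qInt q n * qStirling1 q n (k + 1))

lemma qInt_sub (q : ℝ) (hq0 : q ≠ 0) (m k : ℤ) :
    qInt q (m - k) = q ^ (-k) * (qInt q m - qInt q k) := by
  by_cases h : q = 1
  · simp [qInt, h]
  · simp only [qInt, if_neg h]
    have h1 : (1 : ℝ) - q ≠ 0 := by intro hh; apply h; linarith
    rw [zpow_sub₀ hq0, zpow_neg]
    field_simp
    ring
  
lemma qStirling1_zero_of_lt (q : ℝ) : ∀ n k, n < k → qStirling1 q n k = 0 := by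
  intro n
  induction n with
  | zero => intro k hk; match k, hk with | (k+1), _ => rfl
  | succ n ih =>
    intro k hk
    match k, hk with
    | (k+1), hk =>
      have h1 : n < k := by omega
      show q ^ (-(n : ℤ)) * (qStirling1 q n k - qInt q n * qStirling1 q n (k + 1)) = 0
      rw [ih k h1, ih (k+1) (by omega)]
      ring

lemma qStirling1_succ_succ (q : ℝ) (n k : ℕ) :
    qStirling1 q (n + 1) (k + 1) =
      q ^ (-(n : ℤ)) * (qStirling1 q n k - qInt q n * qStirling1 q n (k + 1)) := rfl

theorem qFallingFactorial_eq_sum_qStirling1_pow (q : ℝ) (hq0 : q ≠ 0)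
    (hq : q ∈ Set.Ioc (-1 : ℝ) 1) (x n : ℕ) :
    (∏ i ∈ Finset.range n, qInt q ((x : ℤ) - i)) =
      ∑ j ∈ Finset.range (n + 1), qStirling1 q n j * qInt q x ^ j := by
  induction n with
  | zero => simp [qStirling1]
  | succ n ih =>
    set a := qInt q x with ha
    set b := qInt q (n : ℤ) with hb
    set c := q ^ (-(n : ℤ)) with hc
    have key : qInt q ((x : ℤ) - n) = c * (a - b) := qInt_sub q hq0 x n
    have hb0 : b * qStirling1 q n 0 = 0 := by
      cases n with
      | zero => rw [hb]; simp [qInt_zero]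
      | succ m => show b * 0 = 0; ring
    have hshift : ∑ j ∈ Finset.range (n + 1), qStirling1 q n (j + 1) * a ^ (j + 1)
        = (∑ j ∈ Finset.range (n + 1), qStirling1 q n j * a ^ j) - qStirling1 q n 0 := by
      have h2 := Finset.sum_range_succ' (fun j => qStirling1 q n j * a ^ j) (n + 1)
      have h3 : ∑ j ∈ Finset.range (n + 2), qStirling1 q n j * a ^ j
          = ∑ j ∈ Finset.range (n + 1), qStirling1 q n j * a ^ j := by
        rw [Finset.sum_range_succ, qStirling1_zero_of_lt q n (n + 1) (by omega)]
        ring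
      simp only [pow_zero, mul_one] at h2
      rw [h3] at h2
      linarith [h2]
    rw [Finset.prod_range_succ, ih, key]
    rw [Finset.sum_range_succ' (fun j => qStirling1 q (n + 1) j * a ^ j) (n + 1)]
    have hcong : ∑ j ∈ Finset.range (n + 1), qStirling1 q (n + 1) (j + 1) * a ^ (j + 1)
        = ∑ j ∈ Finset.range (n + 1),
            (c * (qStirling1 q n j * a ^ j) * a - c * b * (qStirling1 q n (j + 1) * a ^ (j + 1))) := by
      refine Finset.sum_congr rfl fun j _ => ?_
      rw [qStirling1_succ_succ, ← hc]
      ring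
    simp only [pow_zero, mul_one]
    rw [hcong, Finset.sum_sub_distrib, ← Finset.sum_mul, ← Finset.mul_sum, ← Finset.mul_sum,
      hshift]
    show (∑ j ∈ Finset.range (n + 1), qStirling1 q n j * a ^ j) * (c * (a - b))
      = c * (∑ j ∈ Finset.range (n + 1), qStirling1 q n j * a ^ j) * a
        - c * b * ((∑ j ∈ Finset.range (n + 1), qStirling1 q n j * a ^ j) - qStirling1 q n 0)
        + qStirling1 q (n + 1) 0
    have h0 : qStirling1 q (n + 1) 0 = 0 := rfl
    rw [h0]
    linear_combination (-c) * hb0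
end
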